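/- Let G be a digraph, P a directed path in G, and A a set of l+1 distinct ancestors of P. For a ∈ A, say that a survives if, when the shortcutter set S = A∖{a} is used to label vertices and form the label partition V_1, …, V_{ℓ'}, the vertex a receives no ✗ label and lies in some class V_i that also contains a vertex of P related to a within the induced subgraph G[V_i]. Then at most one element of A survives; consequently, if a is chosen uniformly at random from A, the probability that a survives is at most 1/(l+1). The same statement holds when A is a set of l+1 distinct descendants of P. -/
import Mathlib


/-- `HasPath E n u v` : there is a directed path with exactly `n` edges from
`u` to `v` in the digraph with edge relation `E`. -/
def HasPath {V : Type} (E : V → V → Prop) : ℕ → V → V → Prop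
  | 0, u, v => u = v
  | n + 1, u, v => ∃ w, E u w ∧ HasPath E n w v

/-- `u ⪯ v` : there is a directed path (possibly of length 0) from `u` to `v`. -/
def Reach {V : Type} (E : V → V → Prop) (u v : V) : Prop := ∃ n, HasPath E n u v

/-- `HasPathIn E C n u v` : there is a directed path with exactly `n` edges
from `u` to `v`, all of whose vertices lie in `C` (reachability through the
induced subgraph `G[C]`). -/
def HasPathIn {V : Type} (E : V → V → Prop) (C : Set V) : ℕ → V → V → Prop
  | 0, u, v => u = v ∧ u ∈ C
  | n + 1, u, v => u ∈ C ∧ ∃ w, E u w ∧ HasPathIn E C n w v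

/-- Reachability within the induced subgraph `G[C]`. -/
def ReachIn {V : Type} (E : V → V → Prop) (C : Set V) (u v : V) : Prop :=
  ∃ n, HasPathIn E C n u v

/-- `w` receives no `✗` label from the shortcutter set `S`: no `v ∈ S` is in
the same strongly connected component as `w`. -/
def NoX {V : Type} (E : V → V → Prop) (S : Finset V) (w : V) : Prop :=
  ∀ v ∈ S, ¬ (Reach E v w ∧ Reach E w v)

/-- `w` and `w'` receive exactly the same labels from the shortcutter set `S`
(for vertices with no `✗` label, this is equivalent to having the same
reachability relations to each `v ∈ S`). -/
def SameLabels {V : Type} (E : V → V → Prop) (S : Finset V) (w w' : V) : Prop :=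
  ∀ v ∈ S, (Reach E v w ↔ Reach E v w') ∧ (Reach E w v ↔ Reach E w' v)

/-- The label class (with respect to the shortcutter set `S`) of a vertex `a`:
all vertices with no `✗` label and the same labels as `a`. -/
def LabelClass {V : Type} (E : V → V → Prop) (S : Finset V) (a : V) : Set V :=
  {x : V | NoX E S x ∧ SameLabels E S a x}

/-- `a` survives when the shortcutter set `S = A \ {a}` is used: `a` receives
no `✗` label and its label class contains a vertex `P j` of the path that is
related to `a` within the induced subgraph on that class. -/
def Survives {V : Type} (E : V → V → Prop) (ℓ : ℕ) (P : ℕ → V) (A : Finset V)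
    [DecidableEq V] (a : V) : Prop :=
  NoX E (A.erase a) a ∧
  ∃ j ≤ ℓ, (P j) ∈ LabelClass E (A.erase a) a ∧
    (ReachIn E (LabelClass E (A.erase a) a) a (P j) ∨
     ReachIn E (LabelClass E (A.erase a) a) (P j) a)


lemma reach_trans {V : Type} {E : V → V → Prop} {u v w : V}
    (h1 : Reach E u v) (h2 : Reach E v w) : Reach E u w := by
  obtain ⟨m, h1⟩ := h1
  obtain ⟨n, h2⟩ := h2
  refine ⟨m + n, ?_⟩
  induction m generalizing u with
  | zero =>
    simp only [HasPath] at h1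
    subst h1
    simpa using h2
  | succ k ih =>
    obtain ⟨x, hx, hp⟩ := h1
    rw [Nat.succ_add]
    exact ⟨x, hx, ih hp⟩

lemma reach_P {V : Type} {E : V → V → Prop} {P : ℕ → V} {ℓ : ℕ}
    (hP : ∀ i < ℓ, E (P i) (P (i + 1))) :
    ∀ i j, i ≤ j → j ≤ ℓ → Reach E (P i) (P j) := by
  intro i j
  induction j with
  | zero =>
    intro hij _
    interval_cases i
    exact ⟨0, rfl⟩
  | succ k ih =>
    intro hij hkℓ
    rcases Nat.lt_or_ge i (k + 1) with h | h
    · have : i ≤ k := Nat.lt_succ_iff.mp h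
      refine reach_trans (ih this (Nat.le_of_succ_le hkℓ)) ?_
      exact ⟨1, P (k + 1), hP k hkℓ, rfl⟩
    · have : i = k + 1 := le_antisymm hij h
      subst this
      exact ⟨0, rfl⟩

lemma reachIn_reach {V : Type} {E : V → V → Prop} {C : Set V} {u v : V}
    (h : ReachIn E C u v) : Reach E u v := by
  obtain ⟨n, h⟩ := h
  refine ⟨n, ?_⟩
  induction n generalizing u with
  | zero => exact h.1
  | succ k ih =>
    obtain ⟨_, x, hx, hp⟩ := h
    exact ⟨x, hx, ih hp⟩

open Classical in
/-- Let `P = ⟨v_0, …, v_ℓ⟩` be a directed path in a digraph `G` and `A` a set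
of `l + 1` distinct ancestors of `P` (or, alternatively, `l + 1` distinct
descendants of `P`).  Then at most one element of `A` survives; consequently a
uniformly random element of `A` survives with probability at most `1/(l+1)`. -/
theorem stmt_4 {V : Type} [DecidableEq V] (E : V → V → Prop) (ℓ : ℕ) (P : ℕ → V)
    (hP : ∀ i < ℓ, E (P i) (P (i + 1))) (l : ℕ) (A : Finset V) (hcard : A.card = l + 1)
    (hA : (∀ a ∈ A, Reach E a (P ℓ) ∧ ¬ Reach E (P 0) a) ∨
          (∀ a ∈ A, Reach E (P 0) a ∧ ¬ Reach E a (P ℓ))) :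
    (∀ a ∈ A, ∀ b ∈ A, Survives E ℓ P A a → Survives E ℓ P A b → a = b) ∧
    ((A.filter (fun a => Survives E ℓ P A a)).card : ℝ) / (A.card : ℝ)
      ≤ 1 / ((l : ℝ) + 1) := by
  have huniq : ∀ a ∈ A, ∀ b ∈ A, Survives E ℓ P A a → Survives E ℓ P A b → a = b := by
    intro a ha b hb hsa hsb
    by_contra hab
    obtain ⟨hnox_a, j, hj, hPjC, hrj⟩ := hsa
    obtain ⟨hnox_b, k, hk, hPkC, hrk⟩ := hsb
    obtain ⟨hnoxPj, hsame_j⟩ := hPjC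
    obtain ⟨hnoxPk, hsame_k⟩ := hPkC
    have hbSa : b ∈ A.erase a := Finset.mem_erase.2 ⟨fun h => hab h.symm, hb⟩
    have haSb : a ∈ A.erase b := Finset.mem_erase.2 ⟨hab, ha⟩
    have hlab_j := hsame_j b hbSa
    have hlab_k := hsame_k a haSb
    have hP0j : Reach E (P 0) (P j) := reach_P hP 0 j (Nat.zero_le _) hj
    have hP0k : Reach E (P 0) (P k) := reach_P hP 0 k (Nat.zero_le _) hk
    have hPjl : Reach E (P j) (P ℓ) := reach_P hP j ℓ hj le_rfl
    have hPkl : Reach E (P k) (P ℓ) := reach_P hP k ℓ hk le_rfl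
    rcases hA with hanc | hdes
    · obtain ⟨haℓ, hna⟩ := hanc a ha
      obtain ⟨hbℓ, hnb⟩ := hanc b hb
      have h1 : ¬ Reach E (P j) b := fun h => hnb (reach_trans hP0j h)
      have h2 : ¬ Reach E (P k) a := fun h => hna (reach_trans hP0k h)
      have hnab : ¬ Reach E a b := fun h => h1 (hlab_j.2.mp h)
      have hnba : ¬ Reach E b a := fun h => h2 (hlab_k.2.mp h)
      have hnbPj : ¬ Reach E b (P j) := fun h => hnba (hlab_j.1.mpr h)
      have hnaPk : ¬ Reach E a (P k) := fun h => hnab (hlab_k.1.mpr h)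
      have haPj : Reach E a (P j) := by
        rcases hrj with h | h
        · exact reachIn_reach h
        · exact absurd (reach_trans hP0j (reachIn_reach h)) hna
      have hbPk : Reach E b (P k) := by
        rcases hrk with h | h
        · exact reachIn_reach h
        · exact absurd (reach_trans hP0k (reachIn_reach h)) hnb
      rcases le_total j k with hjk | hkj
      · exact hnaPk (reach_trans haPj (reach_P hP j k hjk hk))
      · exact hnbPj (reach_trans hbPk (reach_P hP k j hkj hj))
    · obtain ⟨haℓ, hna⟩ := hdes a ha
      obtain ⟨hbℓ, hnb⟩ := hdes b hb
      have h1 : ¬ Reach E b (P j) := fun h => hnb (reach_trans h hPjl)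
      have h2 : ¬ Reach E a (P k) := fun h => hna (reach_trans h hPkl)
      have hnba : ¬ Reach E b a := fun h => h1 (hlab_j.1.mp h)
      have hnab : ¬ Reach E a b := fun h => h2 (hlab_k.1.mp h)
      have hnPjb : ¬ Reach E (P j) b := fun h => hnab (hlab_j.2.mpr h)
      have hnPka : ¬ Reach E (P k) a := fun h => hnba (hlab_k.2.mpr h)
      have hPja : Reach E (P j) a := by
        rcases hrj with h | h
        · exact absurd (reach_trans (reachIn_reach h) hPjl) hna
        · exact reachIn_reach h
      have hPkb : Reach E (P k) b := by
        rcases hrk with h | h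
        · exact absurd (reach_trans (reachIn_reach h) hPkl) hnb
        · exact reachIn_reach h
      rcases le_total j k with hjk | hkj
      · exact hnPjb (reach_trans (reach_P hP j k hjk hk) hPkb)
      · exact hnPka (reach_trans (reach_P hP k j hkj hj) hPja)
  refine ⟨huniq, ?_⟩
  have hfil : (A.filter (fun a => Survives E ℓ P A a)).card ≤ 1 := by
    refine Finset.card_le_one.2 ?_
    intro x hx y hy
    rw [Finset.mem_filter] at hx hy
    exact huniq x hx.1 y hy.1 hx.2 hy.2
  rw [hcard]
  have h1 : ((A.filter (fun a => Survives E ℓ P A a)).card : ℝ) ≤ 1 := by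
    exact_mod_cast hfil
  have h2 : ((l + 1 : ℕ) : ℝ) = (l : ℝ) + 1 := by push_cast; ring
  rw [h2]
  gcongr
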